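/- Let E₈ ⊆ ℝ² be the octagon given as the convex hull of the eight points (1,0), (2,0), (3,1), (3,2), (2,3), (1,3), (0,2), (0,1). Then E₈ + ℤ² is a seven-fold lattice tiling of ℝ². -/

import Mathlib

open Set

/-- `K + Λ` is a `k`-fold tiling of `ℝⁿ`. -/
def IsKFoldTiling {n : ℕ} (K Λ : Set (Fin n → ℝ)) (k : ℕ) : Prop :=
  ∀ x : Fin n → ℝ,
    (k : ℕ∞) ≤ {v | v ∈ Λ ∧ x - v ∈ K}.encard ∧
    {v | v ∈ Λ ∧ x - v ∈ interior K}.encard ≤ (k : ℕ∞)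

/-- The integer lattice `ℤⁿ ⊆ ℝⁿ`. -/
def intLattice (n : ℕ) : Set (Fin n → ℝ) := {v | ∀ i, ∃ m : ℤ, v i = m}

/-- The octagon `E₈` with vertices `(1,0), (2,0), (3,1), (3,2), (2,3), (1,3),
(0,2), (0,1)`. -/
noncomputable def E₈ : Set (Fin 2 → ℝ) :=
  convexHull ℝ ({![1, 0], ![2, 0], ![3, 1], ![3, 2],
    ![2, 3], ![1, 3], ![0, 2], ![0, 1]} : Set (Fin 2 → ℝ))

/-! ### Auxiliary material -/

/-- The octagon as an intersection of halfplanes. -/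
def Pset : Set (Fin 2 → ℝ) :=
  {u | 0 ≤ u 0 ∧ u 0 ≤ 3 ∧ 0 ≤ u 1 ∧ u 1 ≤ 3 ∧ 1 ≤ u 0 + u 1 ∧ u 0 + u 1 ≤ 5 ∧
    -2 ≤ u 0 - u 1 ∧ u 0 - u 1 ≤ 2}

lemma convex_Pset : Convex ℝ Pset := by
  intro p hp q hq a b ha hb hab
  obtain ⟨h1,h2,h3,h4,h5,h6,h7,h8⟩ := hp
  obtain ⟨g1,g2,g3,g4,g5,g6,g7,g8⟩ := hq
  have e : ∀ i, (a • p + b • q) i = a * p i + b * q i := fun i => rfl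
  refine ⟨?_,?_,?_,?_,?_,?_,?_,?_⟩ <;> simp only [e] <;> nlinarith

lemma E8_subset_Pset : E₈ ⊆ Pset := by
  apply convexHull_min _ convex_Pset
  intro v hv
  simp only [Set.mem_insert_iff, Set.mem_singleton_iff] at hv
  rcases hv with rfl|rfl|rfl|rfl|rfl|rfl|rfl|rfl <;>
    refine ⟨?_,?_,?_,?_,?_,?_,?_,?_⟩ <;> norm_num

lemma comb_mem_E8 {q r q' r' : Fin 2 → ℝ}
    (hq : q ∈ ({![1, 0], ![2, 0], ![3, 1], ![3, 2], ![2, 3], ![1, 3], ![0, 2], ![0, 1]} : Set (Fin 2 → ℝ)))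
    (hr : r ∈ ({![1, 0], ![2, 0], ![3, 1], ![3, 2], ![2, 3], ![1, 3], ![0, 2], ![0, 1]} : Set (Fin 2 → ℝ)))
    (hq' : q' ∈ ({![1, 0], ![2, 0], ![3, 1], ![3, 2], ![2, 3], ![1, 3], ![0, 2], ![0, 1]} : Set (Fin 2 → ℝ)))
    (hr' : r' ∈ ({![1, 0], ![2, 0], ![3, 1], ![3, 2], ![2, 3], ![1, 3], ![0, 2], ![0, 1]} : Set (Fin 2 → ℝ)))
    {a a' b : ℝ} (ha0 : 0 ≤ a) (ha1 : a ≤ 1) (ha'0 : 0 ≤ a') (ha'1 : a' ≤ 1)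
    (hb0 : 0 ≤ b) (hb1 : b ≤ 1) {p : Fin 2 → ℝ}
    (hp : ∀ i, p i = (1-b) * ((1-a) * q i + a * r i) + b * ((1-a') * q' i + a' * r' i)) :
    p ∈ E₈ := by
  have hc := convex_convexHull ℝ
    ({![1, 0], ![2, 0], ![3, 1], ![3, 2], ![2, 3], ![1, 3], ![0, 2], ![0, 1]} : Set (Fin 2 → ℝ))
  have hQ : (1-a) • q + a • r ∈ E₈ :=
    hc (subset_convexHull _ _ hq) (subset_convexHull _ _ hr) (by linarith) ha0 (by ring)
  have hQ' : (1-a') • q' + a' • r' ∈ E₈ :=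
    hc (subset_convexHull _ _ hq') (subset_convexHull _ _ hr') (by linarith) ha'0 (by ring)
  have := hc hQ hQ' (show (0:ℝ) ≤ 1 - b by linarith) hb0 (by ring)
  convert this using 1
  · rfl
  funext i
  simp only [Pi.add_apply, Pi.smul_apply, smul_eq_mul]
  rw [hp i]

lemma Pset_subset_E8 : Pset ⊆ E₈ := by
  intro u hu
  obtain ⟨h1,h2,h3,h4,h5,h6,h7,h8⟩ := hu
  rcases le_or_gt (u 0) 1 with hc | hc
  · have hd : (0:ℝ) < 1 + 2 * u 0 := by linarith
    refine comb_mem_E8 (q := ![0,1]) (r := ![1,0]) (q' := ![0,2]) (r' := ![1,3])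
      (by norm_num) (by norm_num) (by norm_num) (by norm_num)
      (a := u 0) (a' := u 0) (b := (u 1 - 1 + u 0)/(1 + 2 * u 0))
      h1 hc h1 hc (div_nonneg (by linarith) (by linarith))
      (by rw [div_le_one hd]; linarith) ?_
    intro i
    fin_cases i <;> simp <;> field_simp <;> ring
  rcases le_or_gt (u 0) 2 with hc2 | hc2
  · refine comb_mem_E8 (q := ![1,0]) (r := ![2,0]) (q' := ![1,3]) (r' := ![2,3])
      (by norm_num) (by norm_num) (by norm_num) (by norm_num)
      (a := u 0 - 1) (a' := u 0 - 1) (b := u 1 / 3)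
      (by linarith) (by linarith) (by linarith) (by linarith)
      (by linarith) (by linarith) ?_
    intro i
    fin_cases i <;> simp <;> ring
  · have hd : (0:ℝ) < 7 - 2 * u 0 := by linarith
    refine comb_mem_E8 (q := ![2,0]) (r := ![3,1]) (q' := ![2,3]) (r' := ![3,2])
      (by norm_num) (by norm_num) (by norm_num) (by norm_num)
      (a := u 0 - 2) (a' := u 0 - 2) (b := (u 1 - u 0 + 2)/(7 - 2 * u 0))
      (by linarith) (by linarith) (by linarith) (by linarith)
      (div_nonneg (by linarith) (by linarith)) (by rw [div_le_one hd]; linarith) ?_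
    intro i
    fin_cases i <;> simp <;> field_simp [show (7 - u 0 * 2) ≠ 0 by linarith] <;> ring

lemma interior_Pset {E : Set (Fin 2 → ℝ)} (hEP : E ⊆ Pset) {u : Fin 2 → ℝ}
    (hu : u ∈ interior E) :
    0 < u 0 ∧ u 0 < 3 ∧ 0 < u 1 ∧ u 1 < 3 ∧ 1 < u 0 + u 1 ∧ u 0 + u 1 < 5 ∧
      -2 < u 0 - u 1 ∧ u 0 - u 1 < 2 := by
  rw [mem_interior_iff_mem_nhds, Metric.mem_nhds_iff] at hu
  obtain ⟨ε, hε, hball⟩ := hu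
  have key : ∀ d : Fin 2 → ℝ, |d 0| ≤ 1 → |d 1| ≤ 1 →
      (fun i => u i + ε/2 * d i) ∈ Pset := by
    intro d h0 h1
    apply hEP
    apply hball
    rw [Metric.mem_ball, dist_pi_lt_iff hε]
    intro i
    rw [Real.dist_eq]
    have e : u i + ε/2 * d i - u i = ε/2 * d i := by ring
    rw [e, abs_mul, abs_of_pos (by linarith : (0:ℝ) < ε/2)]
    have : |d i| ≤ 1 := by fin_cases i <;> assumption
    nlinarith
  have k1 := key ![-1, 0] (by norm_num) (by norm_num)
  have k2 := key ![1, 0] (by norm_num) (by norm_num)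
  have k3 := key ![0, -1] (by norm_num) (by norm_num)
  have k4 := key ![0, 1] (by norm_num) (by norm_num)
  have k5 := key ![-1, -1] (by norm_num) (by norm_num)
  have k6 := key ![1, 1] (by norm_num) (by norm_num)
  have k7 := key ![-1, 1] (by norm_num) (by norm_num)
  have k8 := key ![1, -1] (by norm_num) (by norm_num)
  simp only [Pset, Set.mem_setOf_eq, Matrix.cons_val_zero, Matrix.cons_val_one,
    Matrix.head_cons] at k1 k2 k3 k4 k5 k6 k7 k8
  refine ⟨by linarith [k1.1], by linarith [k2.2.1], by linarith [k3.2.2.1],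
    by linarith [k4.2.2.2.1], by linarith [k5.2.2.2.2.1], by linarith [k6.2.2.2.2.2.1],
    by linarith [k7.2.2.2.2.2.2.1], by linarith [k8.2.2.2.2.2.2.2]⟩

lemma lower_aux (x : Fin 2 → ℝ) (E : Set (Fin 2 → ℝ)) (off : Fin 7 → Fin 2 → ℤ)
    (hinj : Function.Injective off)
    (hmem : ∀ i : Fin 7, x - (fun j => ((off i j : ℤ) : ℝ)) ∈ E) :
    (7:ℕ∞) ≤ {v | v ∈ intLattice 2 ∧ x - v ∈ E}.encard := by
  set g : Fin 7 → (Fin 2 → ℝ) := fun i j => ((off i j : ℤ) : ℝ) with hg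
  have hginj : Function.Injective g := by
    intro i i' h
    apply hinj
    funext j
    have := congrFun h j
    simp only [hg] at this
    exact_mod_cast this
  have hsub : Set.range g ⊆ {v | v ∈ intLattice 2 ∧ x - v ∈ E} := by
    rintro _ ⟨i, rfl⟩
    exact ⟨fun j => ⟨off i j, rfl⟩, hmem i⟩
  have h7 : (Set.range g).encard = 7 := by
    rw [← Set.image_univ, hginj.injOn.encard_image, Set.encard_univ]
    simp
  rw [← h7]
  exact Set.encard_mono hsub

lemma encard7 {α : Type*} (a b c d e f g : α) :
    ({a,b,c,d,e,f,g} : Set α).encard ≤ 7 := by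
  have e1 : ({g} : Set α).encard ≤ 1 := le_of_eq (Set.encard_singleton g)
  have e2 : ({f,g} : Set α).encard ≤ 2 :=
    le_trans (Set.encard_insert_le _ _) (by exact_mod_cast add_le_add_left e1 1)
  have e3 : ({e,f,g} : Set α).encard ≤ 3 :=
    le_trans (Set.encard_insert_le _ _) (by exact_mod_cast add_le_add_left e2 1)
  have e4 : ({d,e,f,g} : Set α).encard ≤ 4 :=
    le_trans (Set.encard_insert_le _ _) (by exact_mod_cast add_le_add_left e3 1)
  have e5 : ({c,d,e,f,g} : Set α).encard ≤ 5 :=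
    le_trans (Set.encard_insert_le _ _) (by exact_mod_cast add_le_add_left e4 1)
  have e6 : ({b,c,d,e,f,g} : Set α).encard ≤ 6 :=
    le_trans (Set.encard_insert_le _ _) (by exact_mod_cast add_le_add_left e5 1)
  exact le_trans (Set.encard_insert_le _ _) (by exact_mod_cast add_le_add_left e6 1)

lemma mem_Pset_off (x : Fin 2 → ℝ) (z0 z1 k l : ℤ) (s t : ℝ)
    (hx0 : x 0 = z0 + s) (hx1 : x 1 = z1 + t)
    (h1 : 0 ≤ s + k) (h2 : s + k ≤ 3) (h3 : 0 ≤ t + l) (h4 : t + l ≤ 3)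
    (h5 : 1 ≤ s + k + (t + l)) (h6 : s + k + (t + l) ≤ 5)
    (h7 : -2 ≤ s + k - (t + l)) (h8 : s + k - (t + l) ≤ 2) :
    (x - fun j => ((![z0, z1] j - ![k, l] j : ℤ) : ℝ)) ∈ Pset := by
  refine ⟨?_,?_,?_,?_,?_,?_,?_,?_⟩ <;>
    simp only [Pi.sub_apply, Matrix.cons_val_zero, Matrix.cons_val_one,
      Matrix.head_cons, Int.cast_sub] <;>
    linarith

/-- Integer vector as a real vector. -/

noncomputable def vec (a b : ℤ) : Fin 2 → ℝ := ![(a:ℝ), (b:ℝ)]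

/-- `E₈ + ℤ²` is a seven-fold lattice tiling of the plane. -/
theorem E8_sevenfold_tiling : IsKFoldTiling E₈ (intLattice 2) 7 := by
  intro x
  obtain ⟨z0, s, hx0, hs0, hs1⟩ : ∃ (z : ℤ) (s : ℝ), x 0 = z + s ∧ 0 ≤ s ∧ s < 1 :=
    ⟨⌊x 0⌋, Int.fract (x 0), (Int.floor_add_fract _).symm, Int.fract_nonneg _,
      Int.fract_lt_one _⟩
  obtain ⟨z1, t, hx1, ht0, ht1⟩ : ∃ (z : ℤ) (t : ℝ), x 1 = z + t ∧ 0 ≤ t ∧ t < 1 :=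
    ⟨⌊x 1⌋, Int.fract (x 1), (Int.floor_add_fract _).symm, Int.fract_nonneg _,
      Int.fract_lt_one _⟩
  constructor
  · -- lower bound
    have main : ∀ off : Fin 7 → Fin 2 → ℤ, Function.Injective off →
        (∀ i : Fin 7, x - (fun j => ((off i j : ℤ) : ℝ)) ∈ E₈) →
        ((7:ℕ):ℕ∞) ≤ {v | v ∈ intLattice 2 ∧ x - v ∈ E₈}.encard := by
      intro off h1 h2
      exact_mod_cast lower_aux x E₈ off h1 h2
    rcases le_or_gt 1 (s + t) with hst | hst <;> rcases le_or_gt t s with hts | hts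
    · -- 1 ≤ s+t, t ≤ s
      apply main (fun i j => ![z0, z1] j - ![![0,0],![0,1],![0,2],![1,0],![1,1],![1,2],![2,1]] i j)
      · have hb : Function.Injective (![![0,0],![0,1],![0,2],![1,0],![1,1],![1,2],![2,1]] : Fin 7 → Fin 2 → ℤ) := by decide
        intro i i' h
        have h0 := congrFun h 0
        have h1 := congrFun h 1
        simp only [Matrix.cons_val_zero, Matrix.cons_val_one, Matrix.head_cons] at h0 h1
        have e0 : (![![0,0],![0,1],![0,2],![1,0],![1,1],![1,2],![2,1]] : Fin 7 → Fin 2 → ℤ) i 0 = ![![0,0],![0,1],![0,2],![1,0],![1,1],![1,2],![2,1]] i' 0 := by omega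
        have e1 : (![![0,0],![0,1],![0,2],![1,0],![1,1],![1,2],![2,1]] : Fin 7 → Fin 2 → ℤ) i 1 = ![![0,0],![0,1],![0,2],![1,0],![1,1],![1,2],![2,1]] i' 1 := by omega
        apply hb
        funext j
        fin_cases j
        · exact e0
        · exact e1
      · intro i
        apply Pset_subset_E8
        fin_cases i
        · refine mem_Pset_off x z0 z1 0 0 s t hx0 hx1 ?_ ?_ ?_ ?_ ?_ ?_ ?_ ?_ <;> push_cast <;> linarith
        · refine mem_Pset_off x z0 z1 0 1 s t hx0 hx1 ?_ ?_ ?_ ?_ ?_ ?_ ?_ ?_ <;> push_cast <;> linarith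
        · refine mem_Pset_off x z0 z1 0 2 s t hx0 hx1 ?_ ?_ ?_ ?_ ?_ ?_ ?_ ?_ <;> push_cast <;> linarith
        · refine mem_Pset_off x z0 z1 1 0 s t hx0 hx1 ?_ ?_ ?_ ?_ ?_ ?_ ?_ ?_ <;> push_cast <;> linarith
        · refine mem_Pset_off x z0 z1 1 1 s t hx0 hx1 ?_ ?_ ?_ ?_ ?_ ?_ ?_ ?_ <;> push_cast <;> linarith
        · refine mem_Pset_off x z0 z1 1 2 s t hx0 hx1 ?_ ?_ ?_ ?_ ?_ ?_ ?_ ?_ <;> push_cast <;> linarith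
        · refine mem_Pset_off x z0 z1 2 1 s t hx0 hx1 ?_ ?_ ?_ ?_ ?_ ?_ ?_ ?_ <;> push_cast <;> linarith
    · -- 1 ≤ s+t, s < t
      apply main (fun i j => ![z0, z1] j - ![![0,0],![0,1],![1,0],![1,1],![1,2],![2,0],![2,1]] i j)
      · have hb : Function.Injective (![![0,0],![0,1],![1,0],![1,1],![1,2],![2,0],![2,1]] : Fin 7 → Fin 2 → ℤ) := by decide
        intro i i' h
        have h0 := congrFun h 0
        have h1 := congrFun h 1
        simp only [Matrix.cons_val_zero, Matrix.cons_val_one, Matrix.head_cons] at h0 h1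
        have e0 : (![![0,0],![0,1],![1,0],![1,1],![1,2],![2,0],![2,1]] : Fin 7 → Fin 2 → ℤ) i 0 = ![![0,0],![0,1],![1,0],![1,1],![1,2],![2,0],![2,1]] i' 0 := by omega
        have e1 : (![![0,0],![0,1],![1,0],![1,1],![1,2],![2,0],![2,1]] : Fin 7 → Fin 2 → ℤ) i 1 = ![![0,0],![0,1],![1,0],![1,1],![1,2],![2,0],![2,1]] i' 1 := by omega
        apply hb
        funext j
        fin_cases j
        · exact e0
        · exact e1
      · intro i
        apply Pset_subset_E8
        fin_cases i
        · refine mem_Pset_off x z0 z1 0 0 s t hx0 hx1 ?_ ?_ ?_ ?_ ?_ ?_ ?_ ?_ <;> push_cast <;> linarith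
        · refine mem_Pset_off x z0 z1 0 1 s t hx0 hx1 ?_ ?_ ?_ ?_ ?_ ?_ ?_ ?_ <;> push_cast <;> linarith
        · refine mem_Pset_off x z0 z1 1 0 s t hx0 hx1 ?_ ?_ ?_ ?_ ?_ ?_ ?_ ?_ <;> push_cast <;> linarith
        · refine mem_Pset_off x z0 z1 1 1 s t hx0 hx1 ?_ ?_ ?_ ?_ ?_ ?_ ?_ ?_ <;> push_cast <;> linarith
        · refine mem_Pset_off x z0 z1 1 2 s t hx0 hx1 ?_ ?_ ?_ ?_ ?_ ?_ ?_ ?_ <;> push_cast <;> linarith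
        · refine mem_Pset_off x z0 z1 2 0 s t hx0 hx1 ?_ ?_ ?_ ?_ ?_ ?_ ?_ ?_ <;> push_cast <;> linarith
        · refine mem_Pset_off x z0 z1 2 1 s t hx0 hx1 ?_ ?_ ?_ ?_ ?_ ?_ ?_ ?_ <;> push_cast <;> linarith
    · -- s+t < 1, t ≤ s
      apply main (fun i j => ![z0, z1] j - ![![0,1],![0,2],![1,0],![1,1],![1,2],![2,1],![2,2]] i j)
      · have hb : Function.Injective (![![0,1],![0,2],![1,0],![1,1],![1,2],![2,1],![2,2]] : Fin 7 → Fin 2 → ℤ) := by decide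
        intro i i' h
        have h0 := congrFun h 0
        have h1 := congrFun h 1
        simp only [Matrix.cons_val_zero, Matrix.cons_val_one, Matrix.head_cons] at h0 h1
        have e0 : (![![0,1],![0,2],![1,0],![1,1],![1,2],![2,1],![2,2]] : Fin 7 → Fin 2 → ℤ) i 0 = ![![0,1],![0,2],![1,0],![1,1],![1,2],![2,1],![2,2]] i' 0 := by omega
        have e1 : (![![0,1],![0,2],![1,0],![1,1],![1,2],![2,1],![2,2]] : Fin 7 → Fin 2 → ℤ) i 1 = ![![0,1],![0,2],![1,0],![1,1],![1,2],![2,1],![2,2]] i' 1 := by omega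
        apply hb
        funext j
        fin_cases j
        · exact e0
        · exact e1
      · intro i
        apply Pset_subset_E8
        fin_cases i
        · refine mem_Pset_off x z0 z1 0 1 s t hx0 hx1 ?_ ?_ ?_ ?_ ?_ ?_ ?_ ?_ <;> push_cast <;> linarith
        · refine mem_Pset_off x z0 z1 0 2 s t hx0 hx1 ?_ ?_ ?_ ?_ ?_ ?_ ?_ ?_ <;> push_cast <;> linarith
        · refine mem_Pset_off x z0 z1 1 0 s t hx0 hx1 ?_ ?_ ?_ ?_ ?_ ?_ ?_ ?_ <;> push_cast <;> linarith
        · refine mem_Pset_off x z0 z1 1 1 s t hx0 hx1 ?_ ?_ ?_ ?_ ?_ ?_ ?_ ?_ <;> push_cast <;> linarith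
        · refine mem_Pset_off x z0 z1 1 2 s t hx0 hx1 ?_ ?_ ?_ ?_ ?_ ?_ ?_ ?_ <;> push_cast <;> linarith
        · refine mem_Pset_off x z0 z1 2 1 s t hx0 hx1 ?_ ?_ ?_ ?_ ?_ ?_ ?_ ?_ <;> push_cast <;> linarith
        · refine mem_Pset_off x z0 z1 2 2 s t hx0 hx1 ?_ ?_ ?_ ?_ ?_ ?_ ?_ ?_ <;> push_cast <;> linarith
    · -- s+t < 1, s < t
      apply main (fun i j => ![z0, z1] j - ![![0,1],![1,0],![1,1],![1,2],![2,0],![2,1],![2,2]] i j)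
      · have hb : Function.Injective (![![0,1],![1,0],![1,1],![1,2],![2,0],![2,1],![2,2]] : Fin 7 → Fin 2 → ℤ) := by decide
        intro i i' h
        have h0 := congrFun h 0
        have h1 := congrFun h 1
        simp only [Matrix.cons_val_zero, Matrix.cons_val_one, Matrix.head_cons] at h0 h1
        have e0 : (![![0,1],![1,0],![1,1],![1,2],![2,0],![2,1],![2,2]] : Fin 7 → Fin 2 → ℤ) i 0 = ![![0,1],![1,0],![1,1],![1,2],![2,0],![2,1],![2,2]] i' 0 := by omega
        have e1 : (![![0,1],![1,0],![1,1],![1,2],![2,0],![2,1],![2,2]] : Fin 7 → Fin 2 → ℤ) i 1 = ![![0,1],![1,0],![1,1],![1,2],![2,0],![2,1],![2,2]] i' 1 := by omega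
        apply hb
        funext j
        fin_cases j
        · exact e0
        · exact e1
      · intro i
        apply Pset_subset_E8
        fin_cases i
        · refine mem_Pset_off x z0 z1 0 1 s t hx0 hx1 ?_ ?_ ?_ ?_ ?_ ?_ ?_ ?_ <;> push_cast <;> linarith
        · refine mem_Pset_off x z0 z1 1 0 s t hx0 hx1 ?_ ?_ ?_ ?_ ?_ ?_ ?_ ?_ <;> push_cast <;> linarith
        · refine mem_Pset_off x z0 z1 1 1 s t hx0 hx1 ?_ ?_ ?_ ?_ ?_ ?_ ?_ ?_ <;> push_cast <;> linarith
        · refine mem_Pset_off x z0 z1 1 2 s t hx0 hx1 ?_ ?_ ?_ ?_ ?_ ?_ ?_ ?_ <;> push_cast <;> linarith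
        · refine mem_Pset_off x z0 z1 2 0 s t hx0 hx1 ?_ ?_ ?_ ?_ ?_ ?_ ?_ ?_ <;> push_cast <;> linarith
        · refine mem_Pset_off x z0 z1 2 1 s t hx0 hx1 ?_ ?_ ?_ ?_ ?_ ?_ ?_ ?_ <;> push_cast <;> linarith
        · refine mem_Pset_off x z0 z1 2 2 s t hx0 hx1 ?_ ?_ ?_ ?_ ?_ ?_ ?_ ?_ <;> push_cast <;> linarith
  · -- upper bound
    have sub_aux : ∀ (T : Set (Fin 2 → ℝ)),
        {v | v ∈ intLattice 2 ∧ x - v ∈ interior E₈} ⊆ T → T.encard ≤ 7 →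
        {v | v ∈ intLattice 2 ∧ x - v ∈ interior E₈}.encard ≤ ((7:ℕ):ℕ∞) := by
      intro T hsub hT
      exact_mod_cast le_trans (Set.encard_mono hsub) hT
    have get_bounds : ∀ v ∈ {v | v ∈ intLattice 2 ∧ x - v ∈ interior E₈},
        ∃ m0 m1 : ℤ, v = vec m0 m1 ∧ (z0 - 2 ≤ m0 ∧ m0 ≤ z0) ∧ (z1 - 2 ≤ m1 ∧ m1 ≤ z1) ∧
          0 < x 0 - m0 ∧ x 0 - m0 < 3 ∧ 0 < x 1 - m1 ∧ x 1 - m1 < 3 ∧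
          1 < (x 0 - m0) + (x 1 - m1) ∧ (x 0 - m0) + (x 1 - m1) < 5 ∧
          -2 < (x 0 - m0) - (x 1 - m1) ∧ (x 0 - m0) - (x 1 - m1) < 2 := by
      rintro v ⟨hvl, hvi⟩
      obtain ⟨m0, hm0⟩ := hvl 0
      obtain ⟨m1, hm1⟩ := hvl 1
      have hint := interior_Pset E8_subset_Pset hvi
      simp only [Pi.sub_apply, hm0, hm1] at hint
      obtain ⟨i1,i2,i3,i4,i5,i6,i7,i8⟩ := hint
      have hveq : v = vec m0 m1 := by
        funext j
        fin_cases j <;> simp [vec, hm0, hm1]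
      have c0 : m0 < z0 + 1 := by
        have : (m0:ℝ) < (z0:ℝ) + 1 := by rw [hx0] at i1; linarith
        exact_mod_cast this
      have c0' : z0 - 3 < m0 := by
        have : (z0:ℝ) - 3 < (m0:ℝ) := by rw [hx0] at i2; linarith
        exact_mod_cast this
      have c1 : m1 < z1 + 1 := by
        have : (m1:ℝ) < (z1:ℝ) + 1 := by rw [hx1] at i3; linarith
        exact_mod_cast this
      have c1' : z1 - 3 < m1 := by
        have : (z1:ℝ) - 3 < (m1:ℝ) := by rw [hx1] at i4; linarith
        exact_mod_cast this
      exact ⟨m0, m1, hveq, ⟨by omega, by omega⟩, ⟨by omega, by omega⟩,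
        i1, i2, i3, i4, i5, i6, i7, i8⟩
    rcases le_or_gt 1 (s + t) with hst | hst <;> rcases le_or_gt t s with hts | hts
    · -- exclude (2,0) and (2,2)
      apply sub_aux {vec z0 z1, vec z0 (z1-1), vec z0 (z1-2), vec (z0-1) z1,
        vec (z0-1) (z1-1), vec (z0-1) (z1-2), vec (z0-2) (z1-1)}
      · intro v hv
        obtain ⟨m0, m1, hveq, ⟨hb1, hb2⟩, ⟨hb3, hb4⟩, i1,i2,i3,i4,i5,i6,i7,i8⟩ :=
          get_bounds v hv
        rw [hx0] at i1 i2 i5 i6 i7 i8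
        rw [hx1] at i3 i4 i5 i6 i7 i8
        have hm0 : m0 = z0 - 2 ∨ m0 = z0 - 1 ∨ m0 = z0 := by omega
        have hm1 : m1 = z1 - 2 ∨ m1 = z1 - 1 ∨ m1 = z1 := by omega
        rw [hveq]
        rcases hm0 with rfl | rfl | rfl <;> rcases hm1 with rfl | rfl | rfl <;>
          first
            | (exfalso; push_cast at i6 i8; linarith)
            | simp [Set.mem_insert_iff]
      · exact encard7 _ _ _ _ _ _ _
    · -- exclude (0,2) and (2,2)
      apply sub_aux {vec z0 z1, vec z0 (z1-1), vec (z0-1) z1,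
        vec (z0-1) (z1-1), vec (z0-1) (z1-2), vec (z0-2) z1, vec (z0-2) (z1-1)}
      · intro v hv
        obtain ⟨m0, m1, hveq, ⟨hb1, hb2⟩, ⟨hb3, hb4⟩, i1,i2,i3,i4,i5,i6,i7,i8⟩ :=
          get_bounds v hv
        rw [hx0] at i1 i2 i5 i6 i7 i8
        rw [hx1] at i3 i4 i5 i6 i7 i8
        have hm0 : m0 = z0 - 2 ∨ m0 = z0 - 1 ∨ m0 = z0 := by omega
        have hm1 : m1 = z1 - 2 ∨ m1 = z1 - 1 ∨ m1 = z1 := by omega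
        rw [hveq]
        rcases hm0 with rfl | rfl | rfl <;> rcases hm1 with rfl | rfl | rfl <;>
          first
            | (exfalso; push_cast at i6 i7; linarith)
            | simp [Set.mem_insert_iff]
      · exact encard7 _ _ _ _ _ _ _
    · -- exclude (0,0) and (2,0)
      apply sub_aux {vec z0 (z1-1), vec z0 (z1-2), vec (z0-1) z1,
        vec (z0-1) (z1-1), vec (z0-1) (z1-2), vec (z0-2) (z1-1), vec (z0-2) (z1-2)}
      · intro v hv
        obtain ⟨m0, m1, hveq, ⟨hb1, hb2⟩, ⟨hb3, hb4⟩, i1,i2,i3,i4,i5,i6,i7,i8⟩ :=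
          get_bounds v hv
        rw [hx0] at i1 i2 i5 i6 i7 i8
        rw [hx1] at i3 i4 i5 i6 i7 i8
        have hm0 : m0 = z0 - 2 ∨ m0 = z0 - 1 ∨ m0 = z0 := by omega
        have hm1 : m1 = z1 - 2 ∨ m1 = z1 - 1 ∨ m1 = z1 := by omega
        rw [hveq]
        rcases hm0 with rfl | rfl | rfl <;> rcases hm1 with rfl | rfl | rfl <;>
          first
            | (exfalso; push_cast at i5 i8; linarith)
            | simp [Set.mem_insert_iff]
      · exact encard7 _ _ _ _ _ _ _
    · -- exclude (0,0) and (0,2)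
      apply sub_aux {vec z0 (z1-1), vec (z0-1) z1,
        vec (z0-1) (z1-1), vec (z0-1) (z1-2), vec (z0-2) z1, vec (z0-2) (z1-1),
        vec (z0-2) (z1-2)}
      · intro v hv
        obtain ⟨m0, m1, hveq, ⟨hb1, hb2⟩, ⟨hb3, hb4⟩, i1,i2,i3,i4,i5,i6,i7,i8⟩ :=
          get_bounds v hv
        rw [hx0] at i1 i2 i5 i6 i7 i8
        rw [hx1] at i3 i4 i5 i6 i7 i8
        have hm0 : m0 = z0 - 2 ∨ m0 = z0 - 1 ∨ m0 = z0 := by omega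
        have hm1 : m1 = z1 - 2 ∨ m1 = z1 - 1 ∨ m1 = z1 := by omega
        rw [hveq]
        rcases hm0 with rfl | rfl | rfl <;> rcases hm1 with rfl | rfl | rfl <;>
          first
            | (exfalso; push_cast at i5 i7; linarith)
            | simp [Set.mem_insert_iff]
      · exact encard7 _ _ _ _ _ _ _
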